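/- Let C, k > 0 and n ≥ 3 a natural number. The polynomial g(r) = C r^n + r - r^2 + k satisfies: there exists r > 0 with g(r) < 0 if and only if C < max over r ∈ (0,∞) of (r^2 - r - k)/r^n, and this maximum is attained at r* = ((n-1) + √((n-1)^2 + 4nk(n-2)))/(2(n-2)) and is strictly positive. -/

import Mathlib

theorem gamma_n1_threshold (C k : ℝ) (hC : 0 < C) (hk : 0 < k)
    (n : ℕ) (hn : 3 ≤ n) :
    let R : ℝ → ℝ := fun r => (r ^ 2 - r - k) / r ^ n
    let rstar : ℝ := ((n - 1) + Real.sqrt ((n - 1) ^ 2 + 4 * n * k * (n - 2))) /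
      (2 * (n - 2))
    IsMaxOn R (Set.Ioi 0) rstar ∧ 0 < R rstar ∧
    ((∃ r : ℝ, 0 < r ∧ C * r ^ n + r - r ^ 2 + k < 0) ↔ C < R rstar) := by
  intro R rstar
  have ha : (3:ℝ) ≤ (n:ℝ) := by exact_mod_cast hn
  set a : ℝ := (n:ℝ) with haa
  have hD : 0 < (a-1)^2 + 4*a*k*(a-2) := by
    nlinarith [mul_pos (mul_pos (show (0:ℝ) < a by linarith) hk) (show (0:ℝ) < a - 2 by linarith)]
  set s : ℝ := Real.sqrt ((a - 1) ^ 2 + 4 * a * k * (a - 2)) with hss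
  have hs2 : s^2 = (a-1)^2 + 4*a*k*(a-2) := Real.sq_sqrt hD.le
  have hs0 : 0 ≤ s := Real.sqrt_nonneg _
  have hs1 : a - 1 < s := by
    by_contra h
    push_neg at h
    have h2 := pow_le_pow_left₀ hs0 h 2
    have hX : 0 < 4*a*k*(a-2) :=
      mul_pos (mul_pos (by linarith : (0:ℝ) < 4*a) hk) (by linarith)
    nlinarith [h2, hX, hs2]
  have hden : 0 < 2*(a-2) := by nlinarith
  have hrstar_eq : rstar = (a - 1 + s)/(2*(a-2)) := rfl
  have hr0 : 0 < rstar := by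
    rw [hrstar_eq]; apply div_pos; nlinarith; exact hden
  have hquad : (a-2)*rstar^2 - (a-1)*rstar - a*k = 0 := by
    rw [hrstar_eq]; have hne : a - 2 ≠ 0 := by linarith
    field_simp; nlinarith [hs2]
  have hrgt : a - 1 < (a-2)*rstar := by
    rw [hrstar_eq]
    have h2 : (a-2)*((a - 1 + s)/(2*(a-2))) = (a-1+s)/2 := by
      have hne : a - 2 ≠ 0 := by linarith
      field_simp
    rw [h2]
    linarith
  clear_value rstar
  clear hrstar_eq
  -- derivative
  have hderiv : ∀ r : ℝ, 0 < r →
      HasDerivAt R ((-(a-2)*r^2 + (a-1)*r + a*k) / r^(n+1)) r := by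
    intro r hr
    have hrne : r ≠ 0 := ne_of_gt hr
    have h1 : HasDerivAt (fun x : ℝ => x^2 - x - k) (2*r - 1) r := by
      have := ((hasDerivAt_pow 2 r).sub (hasDerivAt_id r)).sub_const k
      simpa using this
    have h2 : HasDerivAt (fun x : ℝ => x^n) ((n:ℝ) * r^(n-1)) r := hasDerivAt_pow n r
    have h := h1.div h2 (pow_ne_zero _ hrne)
    refine HasDerivAt.congr_deriv h ?_
    obtain ⟨m, rfl⟩ : ∃ m, n = m + 3 := ⟨n - 3, by omega⟩
    have : (m + 3) - 1 = m + 2 := by omega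
    rw [this]
    rw [haa]
    push_cast
    field_simp
    ring
  have hcont : ∀ r ∈ Set.Ioi (0:ℝ), ContinuousWithinAt R (Set.Ioi 0) r := fun r hr =>
    (hderiv r hr).continuousAt.continuousWithinAt
  have hqpos : ∀ r : ℝ, 0 < r → r < rstar → 0 < -(a-2)*r^2 + (a-1)*r + a*k := by
    intro r h1 h2
    have hfac : 0 < (a-2)*(r+rstar) - (a-1) := by
      nlinarith [mul_pos (show (0:ℝ) < a - 2 by linarith) h1]
    nlinarith [mul_pos (sub_pos.2 h2) hfac, hquad]
  have hqneg : ∀ r : ℝ, rstar < r → -(a-2)*r^2 + (a-1)*r + a*k < 0 := by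
    intro r h2
    have hfac : 0 < (a-2)*(r+rstar) - (a-1) := by
      nlinarith [mul_pos (show (0:ℝ) < a - 2 by linarith) (hr0.trans h2), hr0]
    nlinarith [mul_pos (sub_pos.2 h2) hfac, hquad]
  have hmono : StrictMonoOn R (Set.Ioc 0 rstar) := by
    apply strictMonoOn_of_deriv_pos (convex_Ioc 0 rstar)
    · intro r hr; exact (hderiv r hr.1).continuousAt.continuousWithinAt
    · intro r hr
      rw [interior_Ioc] at hr
      rw [(hderiv r hr.1).deriv]
      exact div_pos (hqpos r hr.1 hr.2) (pow_pos hr.1 _)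
  have hanti : StrictAntiOn R (Set.Ici rstar) := by
    apply strictAntiOn_of_deriv_neg (convex_Ici rstar)
    · intro r hr; exact (hderiv r (lt_of_lt_of_le hr0 hr)).continuousAt.continuousWithinAt
    · intro r hr
      rw [interior_Ici] at hr
      rw [(hderiv r (hr0.trans hr)).deriv]
      exact div_neg_of_neg_of_pos (hqneg r hr) (pow_pos (hr0.trans hr) _)
  have hmax : IsMaxOn R (Set.Ioi 0) rstar := by
    intro r hr
    simp only [Set.mem_setOf_eq]
    rcases le_total r rstar with h | h
    · exact hmono.monotoneOn ⟨hr, h⟩ ⟨hr0, le_refl _⟩ h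
    · exact hanti.antitoneOn (Set.self_mem_Ici) h h
  have h3 : (a - 2) * (rstar^2 - rstar - k) = rstar + 2*k := by linear_combination hquad
  have hnum : 0 < rstar^2 - rstar - k := by
    have h4 : 0 < (a - 2) * (rstar^2 - rstar - k) := by rw [h3]; linarith
    rcases mul_pos_iff.mp h4 with ⟨h5, h6⟩ | ⟨h5, h6⟩
    · exact h6
    · linarith
  have hRpos : 0 < R rstar := by
    show 0 < (rstar ^ 2 - rstar - k) / rstar ^ n
    exact div_pos hnum (pow_pos hr0 _)
  refine ⟨hmax, hRpos, ?_, ?_⟩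
  · rintro ⟨r, hr, hlt⟩
    have h1 : C < R r := by
      show C < (r ^ 2 - r - k) / r ^ n
      rw [lt_div_iff₀ (pow_pos hr n)]
      linarith
    exact lt_of_lt_of_le h1 (hmax (Set.mem_Ioi.2 hr))
  · intro hlt
    refine ⟨rstar, hr0, ?_⟩
    have hlt' : C < (rstar ^ 2 - rstar - k) / rstar ^ n := hlt
    rw [lt_div_iff₀ (pow_pos hr0 n)] at hlt'
    linarith
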